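/- The minimizer over σ² > 0 of the reversed Kullback-Leibler divergence d(R, R̂) = tr(R̂⁻¹R − I) − log det(R̂⁻¹R), with R = σ² a aᴴ + I and a a unit vector, is σ² = 1/(aᴴ R̂⁻¹ a) − 1, provided 0 < aᴴ R̂⁻¹ a < 1. -/
import Mathlib

open Matrix Complex ComplexOrder

lemma trace_mul_vecMulVec {M : ℕ} (A : Matrix (Fin M) (Fin M) ℂ) (a b : Fin M → ℂ) :
    Matrix.trace (A * Matrix.vecMulVec a b) = b ⬝ᵥ A *ᵥ a := by
  simp only [Matrix.trace, Matrix.diag_apply, Matrix.mul_apply, Matrix.vecMulVec_apply,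
    dotProduct, Matrix.mulVec, Finset.mul_sum]
  exact Finset.sum_congr rfl fun i _ => Finset.sum_congr rfl fun j _ => by ring

lemma det_one_add_smul_vecMulVec {M : ℕ} (s : ℂ) (a : Fin M → ℂ) (ha : star a ⬝ᵥ a = 1) :
    Matrix.det ((s : ℂ) • Matrix.vecMulVec a (star a) + 1) = 1 + s := by
  have h1 : (s : ℂ) • Matrix.vecMulVec a (star a) = Matrix.vecMulVec (s • a) (star a) := by
    ext i j
    simp [Matrix.vecMulVec_apply]
    ring
  rw [h1, Matrix.vecMulVec_eq Unit, add_comm, Matrix.det_one_add_replicateCol_mul_replicateRow]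
  rw [dotProduct_smul, ha]
  simp

theorem stmt_13 {M : ℕ} (Rh : Matrix (Fin M) (Fin M) ℂ) (hRh : Rh.PosDef)
    (a : Fin M → ℂ) (ha : star a ⬝ᵥ a = 1)
    (q : ℝ) (hq : q = (star a ⬝ᵥ Rh⁻¹ *ᵥ a).re) (hq0 : 0 < q) (hq1 : q < 1)
    (R : ℝ → Matrix (Fin M) (Fin M) ℂ)
    (hR : ∀ s : ℝ, R s = (s : ℂ) • Matrix.vecMulVec a (star a) + 1)
    (f : ℝ → ℝ)
    (hf : ∀ s : ℝ, f s = (Matrix.trace (Rh⁻¹ * R s - 1)).re -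
      Real.log ((Matrix.det (Rh⁻¹ * R s)).re)) :
    ∀ t : ℝ, 0 < t → f (1 / q - 1) ≤ f t := by
  have hinv : (Rh⁻¹).PosDef := hRh.inv
  have hdet : (0 : ℂ) < Matrix.det Rh⁻¹ := hinv.det_pos
  set d : ℝ := (Matrix.det Rh⁻¹).re with hd
  have hd0 : 0 < d := (Complex.pos_iff.mp hdet).1
  have hdim : (Matrix.det Rh⁻¹).im = 0 := (Complex.pos_iff.mp hdet).2.symm
  -- formula for f
  have key : ∀ s : ℝ, -1 < s →
      f s = s * q + (Matrix.trace (Rh⁻¹ - 1)).re - (Real.log d + Real.log (1 + s)) := by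
    intro s hs
    have hdet2 : Matrix.det (Rh⁻¹ * R s) = Matrix.det Rh⁻¹ * (1 + (s : ℂ)) := by
      rw [Matrix.det_mul, hR, det_one_add_smul_vecMulVec s a ha]
    have hre : (Matrix.det (Rh⁻¹ * R s)).re = d * (1 + s) := by
      rw [hdet2]
      simp [Complex.mul_re, hdim, hd]
    have htrace : (Matrix.trace (Rh⁻¹ * R s - 1)).re
        = s * q + (Matrix.trace (Rh⁻¹ - 1)).re := by
      have : Rh⁻¹ * R s - 1 = (s : ℂ) • (Rh⁻¹ * Matrix.vecMulVec a (star a)) + (Rh⁻¹ - 1) := by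
        rw [hR]
        rw [Matrix.mul_add, Matrix.mul_smul, Matrix.mul_one]
        abel
      rw [this, Matrix.trace_add, Matrix.trace_smul, trace_mul_vecMulVec]
      simp [hq, Complex.add_re, Complex.smul_re]
    rw [hf, htrace, hre, Real.log_mul (ne_of_gt hd0) (by linarith)]
  intro t ht
  have hsstar : -1 < 1 / q - 1 := by
    have : 0 < 1 / q := by positivity
    linarith
  rw [key _ hsstar, key t (by linarith)]
  have h1q : 1 + (1 / q - 1) = 1 / q := by ring
  rw [h1q]
  have hlog : Real.log q + Real.log (1 + t) ≤ q * (1 + t) - 1 := by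
    have := Real.log_le_sub_one_of_pos (show 0 < q * (1 + t) by positivity)
    rwa [Real.log_mul (ne_of_gt hq0) (by linarith)] at this
  have hloginv : Real.log (1 / q) = - Real.log q := by
    rw [one_div, Real.log_inv]
  rw [hloginv]
  have hcq : (1 / q) * q = 1 := one_div_mul_cancel (ne_of_gt hq0)
  nlinarith [hlog, hcq]
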